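/- Let μ ≠ 0, ρ ∈ ℝ, and let x : I → ℝ be a twice differentiable function on an interval I with x(s) > 0 and x(s) ≠ 1 for all s, satisfying x''(s) = Q₂(x(s), x'(s)) where Q₂(x,y) = (−μ²x² − ρx²(log x)² + ρx² log x − y² log x)/(x(log x)²). Then the function s ↦ F(x(s), x'(s)), where F(x,y) = y²(log x)² + μ²x² + ρ(1 − log x)²x², is constant on I; moreover, if ρ ≥ 0 then this constant is positive. -/

import Mathlib

/-- The second component `Q₂(x,y)` of the phase-plane vector field associated to the
Euler–Lagrange equation of the curvature energy `Θ_μ` in the 2-space form of curvature `ρ`. -/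
noncomputable def phaseQ₂ (μ ρ x y : ℝ) : ℝ :=
  (-μ ^ 2 * x ^ 2 - ρ * x ^ 2 * (Real.log x) ^ 2 + ρ * x ^ 2 * Real.log x
    - y ^ 2 * Real.log x) / (x * (Real.log x) ^ 2)

/-- The first integral `F(x,y) = y²(log x)² + μ²x² + ρ(1 − log x)²x²` of the phase-plane
system; its level sets are the orbits. -/
noncomputable def phaseF (μ ρ x y : ℝ) : ℝ :=
  y ^ 2 * (Real.log x) ^ 2 + μ ^ 2 * x ^ 2 + ρ * (1 - Real.log x) ^ 2 * x ^ 2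

/-- If a twice differentiable function `x` on an interval `I`, with values in `(0,∞) \ {1}`,
satisfies `x'' = Q₂(x, x')`, then `s ↦ F(x(s), x'(s))` is constant on `I`; if moreover
`ρ ≥ 0`, this constant is positive. -/
theorem phase_first_integral (μ ρ : ℝ) (hμ : μ ≠ 0) (I : Set ℝ) (hIopen : IsOpen I)
    (hIconn : I.OrdConnected)
    (x : ℝ → ℝ) (hxpos : ∀ s ∈ I, 0 < x s) (hx1 : ∀ s ∈ I, x s ≠ 1)
    (hx1' : ∀ s ∈ I, DifferentiableAt ℝ x s)
    (hx2' : ∀ s ∈ I, DifferentiableAt ℝ (deriv x) s)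
    (hode : ∀ s ∈ I, deriv (deriv x) s = phaseQ₂ μ ρ (x s) (deriv x s)) :
    (∀ s ∈ I, ∀ t ∈ I, phaseF μ ρ (x s) (deriv x s) = phaseF μ ρ (x t) (deriv x t)) ∧
    (0 ≤ ρ → ∀ s ∈ I, 0 < phaseF μ ρ (x s) (deriv x s)) := by
  set g : ℝ → ℝ := fun s => phaseF μ ρ (x s) (deriv x s) with hg
  have key : ∀ s ∈ I, HasDerivAt g 0 s := by
    intro s hs
    have hu : 0 < x s := hxpos s hs
    have hu0 : x s ≠ 0 := ne_of_gt hu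
    have hL : Real.log (x s) ≠ 0 := Real.log_ne_zero_of_pos_of_ne_one hu (hx1 s hs)
    have hx : HasDerivAt x (deriv x s) s := (hx1' s hs).hasDerivAt
    have hx' : HasDerivAt (deriv x) (phaseQ₂ μ ρ (x s) (deriv x s)) s := by
      rw [← hode s hs]; exact (hx2' s hs).hasDerivAt
    have hlog : HasDerivAt (fun t => Real.log (x t)) (deriv x s / x s) s := by
      have := (Real.hasDerivAt_log hu0).comp s hx
      rw [div_eq_inv_mul]; exact this
    have hF : HasDerivAt g
        (2 * deriv x s * phaseQ₂ μ ρ (x s) (deriv x s) * (Real.log (x s)) ^ 2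
          + (deriv x s) ^ 2 * (2 * Real.log (x s) * (deriv x s / x s))
          + μ ^ 2 * (2 * x s * deriv x s)
          + (ρ * (2 * (1 - Real.log (x s)) * (-(deriv x s / x s))) * (x s) ^ 2
            + ρ * (1 - Real.log (x s)) ^ 2 * (2 * x s * deriv x s))) s := by
      have h1 : HasDerivAt (fun t => (deriv x t) ^ 2 * (Real.log (x t)) ^ 2)
          (2 * deriv x s * phaseQ₂ μ ρ (x s) (deriv x s) * (Real.log (x s)) ^ 2
            + (deriv x s) ^ 2 * (2 * Real.log (x s) * (deriv x s / x s))) s := by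
        have ha := hx'.pow 2
        have hb := hlog.pow 2
        have := ha.mul hb
        exact this.congr_deriv (by simp only [Pi.pow_apply]; push_cast; ring)
      have h2 : HasDerivAt (fun t => μ ^ 2 * (x t) ^ 2) (μ ^ 2 * (2 * x s * deriv x s)) s := by
        have := (hx.pow 2).const_mul (μ ^ 2)
        exact this.congr_deriv (by push_cast; ring)
      have h3 : HasDerivAt (fun t => ρ * (1 - Real.log (x t)) ^ 2 * (x t) ^ 2)
          (ρ * (2 * (1 - Real.log (x s)) * (-(deriv x s / x s))) * (x s) ^ 2
            + ρ * (1 - Real.log (x s)) ^ 2 * (2 * x s * deriv x s)) s := by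
        have ha : HasDerivAt (fun t => (1 : ℝ) - Real.log (x t)) (-(deriv x s / x s)) s :=
          by have := (hasDerivAt_const s (1:ℝ)).sub hlog; rw [zero_sub] at this; exact this
        have := ((ha.pow 2).const_mul ρ).mul (hx.pow 2)
        exact this.congr_deriv (by simp only [Pi.pow_apply]; push_cast; ring)
      have := (h1.add h2).add h3
      exact this
    have hzero : (2 * deriv x s * phaseQ₂ μ ρ (x s) (deriv x s) * (Real.log (x s)) ^ 2
          + (deriv x s) ^ 2 * (2 * Real.log (x s) * (deriv x s / x s))
          + μ ^ 2 * (2 * x s * deriv x s)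
          + (ρ * (2 * (1 - Real.log (x s)) * (-(deriv x s / x s))) * (x s) ^ 2
            + ρ * (1 - Real.log (x s)) ^ 2 * (2 * x s * deriv x s))) = 0 := by
      unfold phaseQ₂
      field_simp
      ring
    rwa [hzero] at hF
  constructor
  · intro s hs t ht
    have hconv : Convex ℝ I := hIconn.convex
    have hdiff : DifferentiableOn ℝ g I := fun s hs => ((key s hs).differentiableAt).differentiableWithinAt
    refine hconv.is_const_of_fderivWithin_eq_zero hdiff (fun z hz => ?_) hs ht
    rw [fderivWithin_of_isOpen hIopen hz, (key z hz).hasFDerivAt.fderiv]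
    ext; simp
  · intro hρ s hs
    have hu : 0 < x s := hxpos s hs
    have hL : Real.log (x s) ≠ 0 := Real.log_ne_zero_of_pos_of_ne_one hu (hx1 s hs)
    unfold phaseF
    have h1 : 0 < μ ^ 2 * (x s) ^ 2 := by positivity
    have h2 : 0 ≤ (deriv x s) ^ 2 * (Real.log (x s)) ^ 2 := by positivity
    have h3 : 0 ≤ ρ * (1 - Real.log (x s)) ^ 2 * (x s) ^ 2 := by positivity
    linarith
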